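/- Let X = A^ℕ for a finite alphabet A, T the left shift, φ continuous, L the transfer operator for φ, and ν a Borel probability measure on X with L*ν = λν for some λ > 0 (i.e. ∫ Lf dν = λ ∫ f dν for all continuous f). Let μ be a T-invariant Borel probability measure with μ ≪ ν and continuous Radon–Nikodym derivative h = dμ/dν. Then Lh = λh holds ν-almost everywhere. -/

import Mathlib

open MeasureTheory

/-- Prepending a symbol to a one-sided configuration. -/
def consSeq {A : Type*} (a : A) (x : ℕ → A) : ℕ → A :=
  fun n => match n with
  | 0 => a
  | Nat.succ m => x m

/-- The left shift on `A^ℕ`. -/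
def shiftT {A : Type*} : (ℕ → A) → (ℕ → A) := fun x n => x (n + 1)

lemma continuous_consSeq {A : Type*} [TopologicalSpace A] (a : A) :
    Continuous (consSeq a) := by
  apply continuous_pi
  intro n
  cases n with
  | zero => exact continuous_const
  | succ m => exact continuous_apply m

lemma continuous_shiftT {A : Type*} [TopologicalSpace A] :
    Continuous (shiftT : (ℕ → A) → (ℕ → A)) :=
  continuous_pi fun n => continuous_apply (n + 1)

lemma shiftT_consSeq {A : Type*} (a : A) (x : ℕ → A) : shiftT (consSeq a x) = x := rfl

lemma integrable_of_continuous {X : Type*} [TopologicalSpace X] [CompactSpace X]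
    [MeasurableSpace X] [OpensMeasurableSpace X] (ν : Measure X) [IsFiniteMeasure ν]
    {f : X → ℝ} (hf : Continuous f) : Integrable f ν :=
  hf.integrable_of_hasCompactSupport (HasCompactSupport.of_compactSpace f)

/-- if `ν` is an eigenmeasure of the transfer operator `L_φ` with
eigenvalue `λ > 0`, and `μ` is a shift-invariant probability measure with
`μ ≪ ν` whose Radon–Nikodym derivative `h = dμ/dν` is continuous, then
`Lh = λh` holds `ν`-a.e. -/
theorem rn_derivative_is_eigenfunction
    {A : Type*} [Fintype A] [Nonempty A]
    [TopologicalSpace A] [DiscreteTopology A] [MeasurableSpace A]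
    [BorelSpace A]
    (φ : (ℕ → A) → ℝ) (hφ : Continuous φ)
    (lam : ℝ) (hlam : 0 < lam)
    (ν : Measure (ℕ → A)) [IsProbabilityMeasure ν]
    (heigm : ∀ f : (ℕ → A) → ℝ, Continuous f →
      ∫ x, (∑ a : A, Real.exp (φ (consSeq a x)) * f (consSeq a x)) ∂ν =
        lam * ∫ x, f x ∂ν)
    (μ : Measure (ℕ → A)) [IsProbabilityMeasure μ]
    (hinv : Measure.map shiftT μ = μ)
    (hac : μ ≪ ν)
    (h : (ℕ → A) → ℝ) (hh : Continuous h) (hhpos : ∀ x, 0 ≤ h x)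
    (hrn : ∀ f : (ℕ → A) → ℝ, Continuous f →
      ∫ x, f x ∂μ = ∫ x, f x * h x ∂ν) :
    (fun x => ∑ a : A, Real.exp (φ (consSeq a x)) * h (consSeq a x))
      =ᵐ[ν] (fun x => lam * h x) := by
  set Lh : (ℕ → A) → ℝ := fun x => ∑ a : A, Real.exp (φ (consSeq a x)) * h (consSeq a x)
    with hLh
  have hLhc : Continuous Lh := by
    apply continuous_finset_sum
    intro a _
    exact ((Real.continuous_exp.comp (hφ.comp (continuous_consSeq a))).mul
      (hh.comp (continuous_consSeq a)))
  -- key identity: for all continuous g, ∫ g·Lh dν = ∫ g·(λh) dν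
  have key : ∀ g : (ℕ → A) → ℝ, Continuous g →
      ∫ x, g x * Lh x ∂ν = ∫ x, g x * (lam * h x) ∂ν := by
    intro g hg
    have hgT : Continuous fun x => g (shiftT x) := hg.comp continuous_shiftT
    have h1 := heigm (fun x => g (shiftT x) * h x) (hgT.mul hh)
    have e1 : ∀ x, (∑ a : A, Real.exp (φ (consSeq a x)) *
        (g (shiftT (consSeq a x)) * h (consSeq a x))) = g x * Lh x := by
      intro x
      rw [hLh, Finset.mul_sum]
      refine Finset.sum_congr rfl fun a _ => ?_
      rw [shiftT_consSeq]
      ring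
    rw [show (fun x => ∑ a : A, Real.exp (φ (consSeq a x)) *
        ((fun y => g (shiftT y) * h y) (consSeq a x))) = fun x => g x * Lh x from
      funext e1] at h1
    -- ∫ g∘T · h dν = ∫ g∘T dμ = ∫ g dμ = ∫ g·h dν
    have h2 : ∫ x, g (shiftT x) * h x ∂ν = ∫ x, g x * h x ∂ν := by
      rw [← hrn _ hgT, ← hrn _ hg]
      conv_rhs => rw [← hinv]
      rw [integral_map continuous_shiftT.measurable.aemeasurable hg.aestronglyMeasurable]
    rw [h1, h2]
    simp_rw [mul_left_comm _ lam]
    rw [integral_const_mul]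
  -- take g = Lh - λ h
  set f : (ℕ → A) → ℝ := fun x => Lh x - lam * h x with hf
  have hfc : Continuous f := hLhc.sub (continuous_const.mul hh)
  have hint : Integrable (fun x => f x * f x) ν := integrable_of_continuous ν (hfc.mul hfc)
  have hzero : ∫ x, f x * f x ∂ν = 0 := by
    have := key f hfc
    have : ∫ x, f x * Lh x ∂ν - ∫ x, f x * (lam * h x) ∂ν = 0 := by rw [this]; ring
    rw [← integral_sub (integrable_of_continuous ν (hfc.mul hLhc) :
        Integrable (fun x => f x * Lh x) ν)
      (integrable_of_continuous ν (hfc.mul (continuous_const.mul hh)) :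
        Integrable (fun x => f x * (lam * h x)) ν)] at this
    simpa [hf, mul_sub] using this
  have hsq : (fun x => f x * f x) =ᵐ[ν] 0 := by
    rw [← integral_eq_zero_iff_of_nonneg (fun x => mul_self_nonneg (f x)) hint]
    exact hzero
  filter_upwards [hsq] with x hx
  have : f x = 0 := by
    have := mul_self_eq_zero.mp hx
    exact this
  have : Lh x - lam * h x = 0 := this
  linarith
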